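/- Let (a_n)_{n≥0} be a sequence of nonnegative reals and γ > 0 such that a_n − a_{n+1} ≥ γ·a_n² for all n ≥ 0. Then for all n ≥ 1, a_n ≤ 1/(γ·n). -/

import Mathlib

/-- If a nonnegative real sequence satisfies `a n - a (n+1) ≥ γ * (a n)^2`,
then `a n ≤ 1/(γ n)` for all `n ≥ 1`. -/
theorem stmt_0 (a : ℕ → ℝ) (γ : ℝ) (hγ : 0 < γ)
    (ha : ∀ n, 0 ≤ a n)
    (hrec : ∀ n, γ * (a n) ^ 2 ≤ a n - a (n + 1)) :
    ∀ n : ℕ, 1 ≤ n → a n ≤ 1 / (γ * n) := by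
  -- key step: if a (n+1) > 0 then (a n)⁻¹ + γ ≤ (a (n+1))⁻¹
  have key : ∀ n, 0 < a (n + 1) → (a n)⁻¹ + γ ≤ (a (n + 1))⁻¹ := by
    intro n hpos
    have hn : 0 < a n := by
      rcases lt_or_eq_of_le (ha n) with h | h
      · exact h
      · exfalso
        have := hrec n
        rw [← h] at this
        nlinarith
    have hle : a (n + 1) ≤ a n := by nlinarith [hrec n, sq_nonneg (a n)]
    have hprod : γ * (a n * a (n + 1)) ≤ a n - a (n + 1) := by
      nlinarith [hrec n, mul_nonneg (mul_nonneg hγ.le hn.le) (sub_nonneg.mpr hle)]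
    rw [add_comm, ← le_sub_iff_add_le]
    have heq : (a (n + 1))⁻¹ - (a n)⁻¹ = (a n - a (n + 1)) / (a n * a (n + 1)) := by
      field_simp
    rw [heq, le_div_iff₀ (by positivity)]
    linarith [hprod]
  -- main claim: for n ≥ 1, a n = 0 ∨ γ * n ≤ (a n)⁻¹
  have main : ∀ n : ℕ, 1 ≤ n → a n = 0 ∨ γ * n ≤ (a n)⁻¹ := by
    intro n hn
    induction n with
    | zero => omega
    | succ m ih =>
      rcases lt_or_eq_of_le (ha (m + 1)) with hpos | h0
      · right
        have hk := key m hpos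
        rcases Nat.eq_zero_or_pos m with hm | hm
        · subst hm
          have : (0:ℝ) ≤ (a 0)⁻¹ := inv_nonneg.mpr (ha 0)
          push_cast
          linarith
        · rcases ih hm with h | h
          · -- a m = 0 contradicts a (m+1) > 0
            exfalso
            have := hrec m
            rw [h] at this
            nlinarith
          · push_cast
            push_cast at h
            linarith
      · left; exact h0.symm
  intro n hn
  have hγn : 0 < γ * n := by positivity
  rcases main n hn with h | h
  · rw [h]; positivity
  · rw [le_inv_comm₀ hγn (lt_of_le_of_ne (ha n) (by
      intro h'; rw [← h'] at h; simp at h; nlinarith))] at h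
    calc a n ≤ (γ * n)⁻¹ := h
      _ = 1 / (γ * n) := (one_div _).symm
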